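/- Let p be a prime and let σ_j = Σ_{i=0}^{j} p^i. For every integer k ≥ 0 and every integer n with σ_k ≤ n < σ_{k+1}, λ_p(n) = p^k + λ_p(n − σ_k), with the convention λ_p(0) = 0. -/

import Mathlib

/-- The row space of a matrix over `ZMod p`: all linear combinations of its rows. -/
def rowSpace {p m n : ℕ} (M : Matrix (Fin m) (Fin n) (ZMod p)) :
    Submodule (ZMod p) (Fin n → ZMod p) :=
  Submodule.span (ZMod p) {v | ∃ i, v = M i}

/-- The capacity of a matrix: the maximal Hamming weight of a vector in its row space. -/
noncomputable def capacity {p m n : ℕ} (M : Matrix (Fin m) (Fin n) (ZMod p)) : ℕ :=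
  sSup (hammingNorm '' (rowSpace M : Set (Fin n → ZMod p)))

/-- `lambdaP p n` is the minimum capacity over all matrices over `𝔽_p`
with `n` columns, none of which is a zero column.  (For `n = 0` this gives `0`.) -/
noncomputable def lambdaP (p n : ℕ) : ℕ :=
  sInf {c | ∃ (m : ℕ) (M : Matrix (Fin m) (Fin n) (ZMod p)),
    (∀ j, ∃ i, M i j ≠ 0) ∧ c = capacity M}

/-- `sigmaP p k = 1 + p + ⋯ + p^k`. -/
def sigmaP (p k : ℕ) : ℕ := ∑ j ∈ Finset.range (k + 1), p ^ j

set_option linter.unusedSectionVars false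
set_option linter.unusedVariables false

lemma sigma_pos (p k : ℕ) : 1 ≤ sigmaP p k := by
  have : (p:ℕ)^0 ≤ sigmaP p k :=
    Finset.single_le_sum (f := fun j => p ^ j) (fun i _ => Nat.zero_le _)
      (Finset.mem_range.mpr (by omega))
  simpa using this

lemma sigma_succ (p k : ℕ) : sigmaP p (k+1) = sigmaP p k + p ^ (k+1) :=
  Finset.sum_range_succ _ _

lemma sigma_mul (p k : ℕ) (hp : 2 ≤ p) : (p - 1) * sigmaP p k = p ^ (k+1) - 1 := by
  induction k with
  | zero => simp [sigmaP]
  | succ k ih =>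
    rw [sigma_succ, Nat.mul_add, ih]
    have h1 : 1 ≤ p ^ (k+1) := Nat.one_le_pow _ _ (by omega)
    have h2 : p ^ (k+1+1) = p * p ^ (k+1) := by ring
    have h4 : (p-1) * p ^ (k+1) = p * p^(k+1) - p^(k+1) := by
      rw [Nat.sub_mul, one_mul]
    have h6 : p ^ (k+1) ≤ p * p^(k+1) := Nat.le_mul_of_pos_left _ (by omega)
    rw [h4, h2]
    omega

lemma sigma_lt_succ (p k : ℕ) (hp : 2 ≤ p) : sigmaP p k < sigmaP p (k+1) := by
  have := sigma_succ p k
  have : 1 ≤ p ^ (k+1) := Nat.one_le_pow _ _ (by omega)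
  omega

lemma sigma_mono (p : ℕ) (hp : 2 ≤ p) {j k : ℕ} (h : j ≤ k) : sigmaP p j ≤ sigmaP p k :=
  Finset.sum_le_sum_of_subset (Finset.range_subset_range.mpr (by omega))

lemma pow_le_sigma (p k : ℕ) : p ^ k ≤ sigmaP p k :=
  Finset.single_le_sum (f := fun j => p ^ j) (fun i _ => Nat.zero_le _)
    (Finset.self_mem_range_succ k)

lemma lt_sigma_self (p k : ℕ) (hp : 2 ≤ p) : k + 1 ≤ sigmaP p k := by
  induction k with
  | zero => exact sigma_pos p 0
  | succ k ih =>
    have := sigma_succ p k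
    have : 1 ≤ p ^ (k+1) := Nat.one_le_pow _ _ (by omega)
    omega

/-- largest k with `sigmaP p k ≤ n` -/
def Kf (p n : ℕ) : ℕ := Nat.findGreatest (fun j => sigmaP p j ≤ n) n

def Fp (p : ℕ) : ℕ → ℕ
  | 0 => 0
  | (n+1) => p ^ Kf p (n+1) + Fp p (n + 1 - sigmaP p (Kf p (n+1)))
decreasing_by
  have := sigma_pos p (Kf p (n+1)); omega

lemma Kf_spec (p n : ℕ) (hp : 2 ≤ p) (hn : 1 ≤ n) :
    sigmaP p (Kf p n) ≤ n ∧ n < sigmaP p (Kf p n + 1) := by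
  constructor
  · exact Nat.findGreatest_spec (P := fun j => sigmaP p j ≤ n) (m := 0) (Nat.zero_le n)
      (by simpa [sigmaP] using hn)
  · by_cases h : Kf p n + 1 ≤ n
    · have := Nat.findGreatest_is_greatest (P := fun j => sigmaP p j ≤ n)
        (k := Kf p n + 1) (Nat.lt_succ_self _) h
      omega
    · have h2 := lt_sigma_self p (Kf p n + 1) hp
      omega

lemma Kf_eq (p n k : ℕ) (hp : 2 ≤ p) (h1 : sigmaP p k ≤ n) (h2 : n < sigmaP p (k+1)) :
    Kf p n = k := by
  have hn : 1 ≤ n := le_trans (sigma_pos p k) h1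
  obtain ⟨hl, hr⟩ := Kf_spec p n hp hn
  by_contra hne
  rcases Nat.lt_or_ge (Kf p n) k with h | h
  · have : sigmaP p (Kf p n + 1) ≤ sigmaP p k := sigma_mono p hp (by omega)
    omega
  · have : sigmaP p (k + 1) ≤ sigmaP p (Kf p n) := sigma_mono p hp (by omega)
    omega

lemma Fp_zero (p : ℕ) : Fp p 0 = 0 := by simp [Fp]

lemma Fp_rec (p n k : ℕ) (hp : 2 ≤ p) (h1 : sigmaP p k ≤ n) (h2 : n < sigmaP p (k+1)) :
    Fp p n = p ^ k + Fp p (n - sigmaP p k) := by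
  have hn : 1 ≤ n := le_trans (sigma_pos p k) h1
  obtain ⟨m, rfl⟩ : ∃ m, n = m + 1 := ⟨n - 1, by omega⟩
  rw [Fp, Kf_eq p (m+1) k hp h1 h2]

lemma Fp_le_self (p : ℕ) (hp : 2 ≤ p) : ∀ n, Fp p n ≤ n := by
  intro n
  induction n using Nat.strong_induction_on with
  | _ n ih =>
    rcases Nat.eq_zero_or_pos n with rfl | hn
    · simp [Fp_zero]
    · obtain ⟨hl, hr⟩ := Kf_spec p n hp hn
      rw [Fp_rec p n (Kf p n) hp hl hr]
      have h1 : p ^ (Kf p n) ≤ sigmaP p (Kf p n) := pow_le_sigma p _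
      have h2 := sigma_pos p (Kf p n)
      have := ih (n - sigmaP p (Kf p n)) (by omega)
      omega

lemma Fp_pos (p n : ℕ) (hp : 2 ≤ p) (hn : 1 ≤ n) : 1 ≤ Fp p n := by
  obtain ⟨hl, hr⟩ := Kf_spec p n hp hn
  rw [Fp_rec p n (Kf p n) hp hl hr]
  have : 1 ≤ p ^ Kf p n := Nat.one_le_pow _ _ (by omega)
  omega

lemma Fp_sigma_mul (p k : ℕ) (hp : 2 ≤ p) {c : ℕ} (hc : c ≤ p - 1) :
    Fp p (c * sigmaP p k) = c * p ^ k := by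
  induction c with
  | zero => simp [Fp_zero]
  | succ c ih =>
    have hs := sigma_pos p k
    have h1 : sigmaP p k ≤ (c+1) * sigmaP p k := by nlinarith
    have h2 : (c+1) * sigmaP p k < sigmaP p (k+1) := by
      have : (c+1) * sigmaP p k ≤ (p-1) * sigmaP p k := by
        apply Nat.mul_le_mul_right; omega
      have h3 := sigma_mul p k hp
      have h4 := sigma_succ p k
      have h5 : 1 ≤ p ^ (k+1) := Nat.one_le_pow _ _ (by omega)
      omega
    rw [Fp_rec p _ k hp h1 h2]
    have : (c+1) * sigmaP p k - sigmaP p k = c * sigmaP p k := by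
      rw [Nat.add_mul]; omega
    rw [this, ih (by omega)]; ring

lemma Fp_mono_succ (p : ℕ) (hp : 2 ≤ p) : ∀ n, Fp p n ≤ Fp p (n+1) := by
  intro n
  induction n using Nat.strong_induction_on with
  | _ n ih =>
    obtain ⟨hl, hr⟩ := Kf_spec p (n+1) hp (by omega)
    set k := Kf p (n+1) with hk
    by_cases hc : sigmaP p k ≤ n
    · have hs := sigma_pos p k
      rw [Fp_rec p (n+1) k hp hl hr, Fp_rec p n k hp hc (by omega)]
      have he : n + 1 - sigmaP p k = (n - sigmaP p k) + 1 := by omega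
      rw [he]
      exact Nat.add_le_add_left (ih _ (by omega)) _
    · have hn1 : sigmaP p k = n + 1 := by omega
      rw [Fp_rec p (n+1) k hp hl hr, hn1, Nat.sub_self, Fp_zero]
      rcases k with _ | k'
      · simp [sigmaP] at hn1
        have : n = 0 := by omega
        subst this; simp [Fp_zero]
      · have hss := sigma_succ p k'
        have hps : 1 ≤ p ^ (k'+1) := Nat.one_le_pow _ _ (by omega)
        have hl' : sigmaP p k' ≤ n := by omega
        have hr' : n < sigmaP p (k'+1) := by omega
        rw [Fp_rec p n k' hp hl' hr']
        have he : n - sigmaP p k' = (p-1) * sigmaP p k' := by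
          have := sigma_mul p k' hp; omega
        rw [he, Fp_sigma_mul p k' hp (le_refl _)]
        have : p ^ k' + (p-1) * p ^ k' = p ^ (k'+1) := by
          have h1 : 1 ≤ p ^ k' := Nat.one_le_pow _ _ (by omega)
          have : (p-1) * p^k' = p * p^k' - p^k' := by rw [Nat.sub_mul, one_mul]
          have h2 : p ^ (k'+1) = p * p ^ k' := by ring
          have h3 : p^k' ≤ p * p^k' := Nat.le_mul_of_pos_left _ (by omega)
          omega
        omega

lemma Fp_mono (p : ℕ) (hp : 2 ≤ p) : Monotone (Fp p) :=
  monotone_nat_of_le_succ (Fp_mono_succ p hp)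

lemma Fp_sigma (p j : ℕ) (hp : 2 ≤ p) : Fp p (sigmaP p j) = p ^ j := by
  rw [Fp_rec p _ j hp (le_refl _) (sigma_lt_succ p j hp), Nat.sub_self, Fp_zero, Nat.add_zero]

lemma pow_le_Fp (p j m : ℕ) (hp : 2 ≤ p) (h : sigmaP p j ≤ m) : p ^ j ≤ Fp p m := by
  calc p ^ j = Fp p (sigmaP p j) := (Fp_sigma p j hp).symm
  _ ≤ Fp p m := Fp_mono p hp h

lemma lemmaG (p : ℕ) (hp : 2 ≤ p) : ∀ n v, v ≤ n → p * Fp p (n - v) ≤ v → Fp p n ≤ v := by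
  intro n
  induction n using Nat.strong_induction_on with
  | _ n ih =>
    intro v hvn hdiv
    rcases Nat.eq_zero_or_pos n with rfl | hn
    · simp [Fp_zero]
    obtain ⟨hl, hr⟩ := Kf_spec p n hp hn
    set k := Kf p n with hk
    -- Step 1 : p ^ k ≤ v
    have hpk : p ^ k ≤ v := by
      by_contra hcon
      push_neg at hcon
      rcases k with _ | k'
      · have hv0 : v = 0 := by simpa using Nat.lt_one_iff.mp (by simpa using hcon)
        subst hv0
        simp only [Nat.sub_zero] at hdiv
        have := Fp_pos p n hp hn
        nlinarith
      · have hss := sigma_succ p k'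
        have hnv : sigmaP p k' ≤ n - v := by omega
        have h1 : p ^ k' ≤ Fp p (n - v) := pow_le_Fp p k' (n-v) hp hnv
        have h2 : p * p ^ k' = p ^ (k'+1) := by ring
        nlinarith
    rw [Fp_rec p n k hp hl hr]
    by_cases hbig : sigmaP p k ≤ n - v
    · -- v ≥ p^(k+1), use the global bound
      have h1 : p ^ k ≤ Fp p (n - v) := pow_le_Fp p k (n-v) hp hbig
      have h2 : p ^ (k+1) ≤ v := by
        have : p * p ^ k = p ^ (k+1) := by ring
        nlinarith
      have h3 : n - sigmaP p k ≤ (p-1) * sigmaP p k := by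
        have := sigma_mul p k hp
        have := sigma_succ p k
        omega
      have h4 : Fp p (n - sigmaP p k) ≤ (p-1) * p ^ k :=
        (Fp_mono p hp h3).trans (le_of_eq (Fp_sigma_mul p k hp (le_refl _)))
      have h5 : p ^ k + (p-1) * p ^ k = p ^ (k+1) := by
        have h6 : p ^ (k+1) = p * p ^ k := by ring
        have : (p-1) * p^k = p * p^k - p^k := by rw [Nat.sub_mul, one_mul]
        have h7 : p^k ≤ p * p^k := Nat.le_mul_of_pos_left _ (by omega)
        omega
      omega
    · push_neg at hbig
      rcases k with _ | k'
      · -- k = 0 : then v = n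
        have hs0 : sigmaP p 0 = 1 := by simp [sigmaP]
        have hveq : v = n := by omega
        have := Fp_le_self p hp n
        rw [Fp_rec p n 0 hp hl hr] at this
        omega
      · have hss : sigmaP p (k'+1) = sigmaP p k' + p ^ (k'+1) := sigma_succ p k'
        have hsp := sigma_pos p k'
        by_cases hmid : sigmaP p k' ≤ n - v
        · -- main recursive subcase
          have hrec : Fp p (n - v) = p ^ k' + Fp p ((n - v) - sigmaP p k') :=
            Fp_rec p (n-v) k' hp hmid (by omega)
          set X := Fp p ((n - v) - sigmaP p k') with hX
          have hmul : p * (p ^ k' + X) = p * p ^ k' + p * X := by ring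
          have hpe : p * p ^ k' = p ^ (k'+1) := by ring
          have hdiv' : p * X ≤ v - p ^ (k'+1) := by
            rw [hrec, hmul, hpe] at hdiv; omega
          have harg : (n - sigmaP p (k'+1)) - (v - p ^ (k'+1)) = (n - v) - sigmaP p k' := by
            omega
          have hle : v - p ^ (k'+1) ≤ n - sigmaP p (k'+1) := by omega
          have := ih (n - sigmaP p (k'+1)) (by omega) (v - p ^ (k'+1)) hle
            (by rw [harg]; exact hdiv')
          omega
        · -- tail subcase : n - sigmaP p k ≤ v - p^k - 1
          push_neg at hmid
          have h1 : Fp p (n - sigmaP p (k'+1)) ≤ n - sigmaP p (k'+1) := Fp_le_self p hp _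
          omega

open Matrix

section Hamming

variable {F : Type*} [DecidableEq F] [Zero F]

lemma hn_card {ι : Type*} [Fintype ι] (v : ι → F) :
    hammingNorm v = Fintype.card {i // v i ≠ 0} := by
  rw [hammingNorm, Fintype.card_subtype]

lemma hn_comp_equiv {ι κ : Type*} [Fintype ι] [Fintype κ] (v : ι → F) (e : κ ≃ ι) :
    hammingNorm (v ∘ e) = hammingNorm v := by
  rw [hn_card, hn_card]
  exact Fintype.card_congr (e.subtypeEquiv (fun k => by simp))

lemma hn_comp_inj {ι κ : Type*} [Fintype ι] [Fintype κ] (v : ι → F) (f : κ → ι)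
    (hf : Function.Injective f) : hammingNorm (v ∘ f) ≤ hammingNorm v := by
  rw [hn_card, hn_card]
  exact Fintype.card_le_of_injective (fun x => ⟨f x.1, x.2⟩)
    (fun x y h => Subtype.ext (hf (congrArg Subtype.val h)))

lemma hn_sum_elim {α β : Type*} [Fintype α] [Fintype β] (v : α → F) (w : β → F) :
    hammingNorm (Sum.elim v w) = hammingNorm v + hammingNorm w := by
  rw [hn_card, hn_card, hn_card, ← Fintype.card_sum]
  exact Fintype.card_congr
    ((Equiv.subtypeSum).trans (Equiv.sumCongr
      (Equiv.subtypeEquivRight (fun a => by simp))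
      (Equiv.subtypeEquivRight (fun b => by simp))))

end Hamming

section Capacity

variable {p : ℕ} [hp : Fact p.Prime]

instance : NeZero p := ⟨hp.out.ne_zero⟩

variable {m n : ℕ} (M : Matrix (Fin m) (Fin n) (ZMod p))

lemma mem_rowSpace {v : Fin n → ZMod p} : v ∈ rowSpace M ↔ ∃ x, x ᵥ* M = v := by
  have h1 : {v : Fin n → ZMod p | ∃ i, v = M i} = Set.range M :=
    Set.ext fun v => ⟨fun ⟨i, h⟩ => ⟨i, h.symm⟩, fun ⟨i, h⟩ => ⟨i, h.symm⟩⟩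
  rw [rowSpace, h1, show Set.range M = Set.range M.row from rfl, ← range_vecMulLinear]
  constructor
  · rintro ⟨x, rfl⟩; exact ⟨x, rfl⟩
  · rintro ⟨x, rfl⟩; exact ⟨x, rfl⟩

lemma capacity_set_nonempty : (hammingNorm '' (rowSpace M : Set (Fin n → ZMod p))).Nonempty :=
  ⟨hammingNorm (0 : Fin n → ZMod p), ⟨0, Submodule.zero_mem _, rfl⟩⟩

lemma capacity_set_bdd : BddAbove (hammingNorm '' (rowSpace M : Set (Fin n → ZMod p))) :=
  (Set.Finite.image _ (Set.toFinite _)).bddAbove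

lemma hn_vecMul_le_capacity (x : Fin m → ZMod p) : hammingNorm (x ᵥ* M) ≤ capacity M :=
  le_csSup (capacity_set_bdd M) ⟨x ᵥ* M, (mem_rowSpace M).mpr ⟨x, rfl⟩, rfl⟩

lemma capacity_le {c : ℕ} (h : ∀ x, hammingNorm (x ᵥ* M) ≤ c) : capacity M ≤ c := by
  apply csSup_le (capacity_set_nonempty M)
  rintro _ ⟨v, hv, rfl⟩
  obtain ⟨x, rfl⟩ := (mem_rowSpace M).mp hv
  exact h x

lemma exists_vecMul_capacity : ∃ x, hammingNorm (x ᵥ* M) = capacity M := by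
  have := Nat.sSup_mem (capacity_set_nonempty M) (capacity_set_bdd M)
  obtain ⟨v, hv, hc⟩ := this
  obtain ⟨x, rfl⟩ := (mem_rowSpace M).mp hv
  exact ⟨x, hc⟩

lemma row_mem_rowSpace (i : Fin m) : M i ∈ rowSpace M :=
  Submodule.subset_span ⟨i, rfl⟩

lemma hn_row_le_capacity (i : Fin m) : hammingNorm (M i) ≤ capacity M :=
  le_csSup (capacity_set_bdd M) ⟨M i, row_mem_rowSpace M i, rfl⟩

end Capacity

section Lambda

variable {p : ℕ} [hp : Fact p.Prime]

lemma lambda_set_nonempty (n : ℕ) : {c | ∃ (m : ℕ) (M : Matrix (Fin m) (Fin n) (ZMod p)),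
    (∀ j, ∃ i, M i j ≠ 0) ∧ c = capacity M}.Nonempty := by
  refine ⟨capacity (fun (_ : Fin 1) (_ : Fin n) => (1 : ZMod p)), 1, _, fun j => ⟨0, one_ne_zero⟩, rfl⟩

lemma lambdaP_le {n m : ℕ} (M : Matrix (Fin m) (Fin n) (ZMod p))
    (h : ∀ j, ∃ i, M i j ≠ 0) : lambdaP p n ≤ capacity M :=
  Nat.sInf_le ⟨m, M, h, rfl⟩

lemma lambdaP_exists (n : ℕ) : ∃ (m : ℕ) (M : Matrix (Fin m) (Fin n) (ZMod p)),
    (∀ j, ∃ i, M i j ≠ 0) ∧ lambdaP p n = capacity M :=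
  Nat.sInf_mem (lambda_set_nonempty n)

lemma lambdaP_mono {n' n : ℕ} (h : n' ≤ n) : lambdaP p n' ≤ lambdaP p n := by
  obtain ⟨m, M, hM, hcap⟩ := lambdaP_exists (p := p) n
  set M' : Matrix (Fin m) (Fin n') (ZMod p) := fun i j => M i (Fin.castLE h j) with hM'
  have hcols : ∀ j, ∃ i, M' i j ≠ 0 := fun j => hM (Fin.castLE h j)
  refine (lambdaP_le M' hcols).trans ?_
  rw [hcap]
  apply capacity_le
  intro x
  have : x ᵥ* M' = (x ᵥ* M) ∘ (Fin.castLE h) := rfl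
  rw [this]
  exact (hn_comp_inj _ _ (Fin.castLE_injective h)).trans (hn_vecMul_le_capacity M x)

lemma lambdaP_zero : lambdaP p 0 = 0 := by
  have h := lambdaP_le (p := p) (fun (_ : Fin 1) (j : Fin 0) => (1 : ZMod p)) (fun j => j.elim0)
  have : capacity (fun (_ : Fin 1) (j : Fin 0) => (1 : ZMod p)) = 0 := by
    apply Nat.le_zero.mp
    apply capacity_le
    intro x
    simp [hn_card]
  omega

lemma lambdaP_le_add {a b m1 m2 : ℕ} (A : Matrix (Fin m1) (Fin a) (ZMod p))
    (B : Matrix (Fin m2) (Fin b) (ZMod p)) (hA : ∀ j, ∃ i, A i j ≠ 0)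
    (hB : ∀ j, ∃ i, B i j ≠ 0) : lambdaP p (a + b) ≤ capacity A + capacity B := by
  set eR : Fin (m1 + m2) ≃ Fin m1 ⊕ Fin m2 := finSumFinEquiv.symm with heR
  set eC : Fin (a + b) ≃ Fin a ⊕ Fin b := finSumFinEquiv.symm with heC
  set D : Matrix (Fin m1 ⊕ Fin m2) (Fin a ⊕ Fin b) (ZMod p) := Matrix.fromBlocks A 0 0 B with hD
  set C : Matrix (Fin (m1 + m2)) (Fin (a + b)) (ZMod p) := D.submatrix eR eC with hC
  have hkey2 : ∀ z : Fin m1 ⊕ Fin m2 → ZMod p,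
      z ᵥ* D = Sum.elim ((z ∘ Sum.inl) ᵥ* A) ((z ∘ Sum.inr) ᵥ* B) := by
    intro z
    funext j
    cases j with
    | inl j1 =>
      simp [hD, Matrix.vecMul, dotProduct, Fintype.sum_sum_type, Matrix.fromBlocks]
    | inr j2 =>
      simp [hD, Matrix.vecMul, dotProduct, Fintype.sum_sum_type, Matrix.fromBlocks]
  have hcols : ∀ j, ∃ i, C i j ≠ 0 := by
    intro j
    rcases hj : eC j with j1 | j2
    · obtain ⟨i, hi⟩ := hA j1
      exact ⟨eR.symm (Sum.inl i), by simpa [hC, hD, Matrix.submatrix_apply, hj] using hi⟩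
    · obtain ⟨i, hi⟩ := hB j2
      exact ⟨eR.symm (Sum.inr i), by simpa [hC, hD, Matrix.submatrix_apply, hj] using hi⟩
  refine (lambdaP_le C hcols).trans ?_
  apply capacity_le
  intro x
  have hkey : x ᵥ* C = ((x ∘ eR.symm) ᵥ* D) ∘ eC := by
    funext j
    show ∑ i, x i * D (eR i) (eC j) = ∑ s, x (eR.symm s) * D s (eC j)
    exact Fintype.sum_equiv eR _ _ (fun i => by rw [Equiv.symm_apply_apply])
  rw [hkey, hn_comp_equiv, hkey2, hn_sum_elim]
  exact add_le_add (hn_vecMul_le_capacity A _) (hn_vecMul_le_capacity B _)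

end Lambda

section Construction

variable {p : ℕ} [hp : Fact p.Prime]

lemma card_affine_fiber {r : ℕ} (y : Fin r → ZMod p) (hy : y ≠ 0) (t c : ZMod p) :
    Fintype.card {u : Fin r → ZMod p // y ⬝ᵥ u + t = c} =
      Fintype.card {u : Fin r → ZMod p // y ⬝ᵥ u + t = 0} := by
  obtain ⟨i0, hi0⟩ : ∃ i, y i ≠ 0 := by
    by_contra h; push_neg at h; exact hy (funext fun i => h i)
  set w : Fin r → ZMod p := Pi.single i0 ((y i0)⁻¹ * (-c)) with hw
  have hyw : y ⬝ᵥ w = -c := by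
    rw [hw, dotProduct_single, ← mul_assoc, mul_inv_cancel₀ hi0, one_mul]
  apply Fintype.card_congr
  refine Equiv.subtypeEquiv (Equiv.addRight w) (fun u => ?_)
  simp only [Equiv.coe_addRight]
  rw [dotProduct_add, hyw]
  constructor <;> intro h <;> linear_combination h

lemma card_affine_zero {r : ℕ} (y : Fin (r+1) → ZMod p) (hy : y ≠ 0) (t : ZMod p) :
    Fintype.card {u : Fin (r+1) → ZMod p // y ⬝ᵥ u + t = 0} = p ^ r := by
  have hptot : Fintype.card (Fin (r+1) → ZMod p) = p ^ (r+1) := by simp [ZMod.card]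
  have hcardZ : Fintype.card (ZMod p) = p := ZMod.card p
  classical
  have hfib : Fintype.card (Fin (r+1) → ZMod p)
      = ∑ c : ZMod p, (Finset.univ.filter fun u : Fin (r+1) → ZMod p => y ⬝ᵥ u + t = c).card := by
    rw [← Finset.card_univ]
    exact Finset.card_eq_sum_card_fiberwise (fun u _ => Finset.mem_univ _)
  have hconst : ∀ c : ZMod p,
      (Finset.univ.filter fun u : Fin (r+1) → ZMod p => y ⬝ᵥ u + t = c).card
        = Fintype.card {u : Fin (r+1) → ZMod p // y ⬝ᵥ u + t = 0} := by
    intro c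
    rw [← Fintype.card_subtype]
    exact card_affine_fiber y hy t c
  rw [Finset.sum_congr rfl (fun c _ => hconst c), Finset.sum_const, Finset.card_univ, hcardZ,
    smul_eq_mul, hptot] at hfib
  have hp1 : 0 < p := hp.out.pos
  have : p ^ (r+1) = p * p ^ r := by ring
  rw [this] at hfib
  exact (Nat.eq_of_mul_eq_mul_left hp1 hfib.symm)

lemma card_affine_ne {r : ℕ} (y : Fin (r+1) → ZMod p) (hy : y ≠ 0) (t : ZMod p) :
    Fintype.card {u : Fin (r+1) → ZMod p // y ⬝ᵥ u + t ≠ 0} = p ^ (r+1) - p ^ r := by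
  classical
  have h1 := Fintype.card_subtype_compl (fun u : Fin (r+1) → ZMod p => y ⬝ᵥ u + t = 0)
  have h2 : Fintype.card {u : Fin (r+1) → ZMod p // ¬(y ⬝ᵥ u + t = 0)}
      = Fintype.card {u : Fin (r+1) → ZMod p // y ⬝ᵥ u + t ≠ 0} := rfl
  rw [h2, card_affine_zero y hy t] at h1
  have hptot : Fintype.card (Fin (r+1) → ZMod p) = p ^ (r+1) := by simp [ZMod.card]
  rw [hptot] at h1
  exact h1

lemma sigma_zero (p' : ℕ) : sigmaP p' 0 = 1 := by simp [sigmaP]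

lemma exists_A (k : ℕ) : ∃ A : Matrix (Fin (k+1)) (Fin (sigmaP p k)) (ZMod p),
    (∀ j, ∃ i, A i j ≠ 0) ∧ ∀ x, hammingNorm (x ᵥ* A) ≤ p ^ k := by
  induction k with
  | zero =>
    refine ⟨fun _ _ => 1, fun j => ⟨0, one_ne_zero⟩, fun x => ?_⟩
    calc hammingNorm (x ᵥ* fun _ _ => (1 : ZMod p)) ≤ Fintype.card (Fin (sigmaP p 0)) :=
      hammingNorm_le_card_fintype
    _ = 1 := by simp [sigma_zero]
    _ = p ^ 0 := by simp
  | succ k ih =>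
    obtain ⟨A, hAcols, hAcap⟩ := ih
    have hcard : Fintype.card (Fin (p ^ (k+1))) = Fintype.card (Fin (k+1) → ZMod p) := by
      simp [ZMod.card]
    set ν : Fin (p ^ (k+1)) ≃ (Fin (k+1) → ZMod p) := Fintype.equivOfCardEq hcard with hν
    set eC : Fin (sigmaP p (k+1)) ≃ Fin (sigmaP p k) ⊕ Fin (p ^ (k+1)) :=
      (finCongr (sigma_succ p k)).trans finSumFinEquiv.symm with heC
    set B : Matrix (Fin (k+2)) (Fin (sigmaP p (k+1))) (ZMod p) := fun i j =>
      Sum.elim (fun j1 => Fin.lastCases 0 (fun i' => A i' j1) i)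
               (fun j2 => Fin.lastCases 1 (fun i' => ν j2 i') i) (eC j) with hB
    refine ⟨B, ?_, ?_⟩
    · intro j
      rcases hj : eC j with j1 | j2
      · obtain ⟨i, hi⟩ := hAcols j1
        refine ⟨i.castSucc, ?_⟩
        simp only [hB, hj, Sum.elim_inl, Fin.lastCases_castSucc]
        exact hi
      · refine ⟨Fin.last (k+1), ?_⟩
        simp only [hB, hj, Sum.elim_inr, Fin.lastCases_last]
        exact one_ne_zero
    · intro x
      set y : Fin (k+1) → ZMod p := x ∘ Fin.castSucc with hy
      set t : ZMod p := x (Fin.last (k+1)) with ht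
      have hkey : x ᵥ* B = (Sum.elim (y ᵥ* A) (fun j2 => y ⬝ᵥ ν j2 + t)) ∘ eC := by
        funext j
        show ∑ i, x i * B i j = _
        rcases hj : eC j with j1 | j2 <;>
          · rw [Fin.sum_univ_castSucc]
            simp only [hB, hj, Function.comp_apply, Sum.elim_inl, Sum.elim_inr,
              Fin.lastCases_castSucc, Fin.lastCases_last]
            simp [Matrix.vecMul, dotProduct, hy, ht, mul_comm]
      rw [hkey, hn_comp_equiv, hn_sum_elim]
      by_cases hy0 : y = 0
      · have h1 : hammingNorm (y ᵥ* A) = 0 := by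
          rw [hy0, Matrix.zero_vecMul]; exact hammingNorm_zero
        have h2 : hammingNorm (fun j2 : Fin (p^(k+1)) => y ⬝ᵥ ν j2 + t) ≤ p ^ (k+1) := by
          calc hammingNorm (fun j2 : Fin (p^(k+1)) => y ⬝ᵥ ν j2 + t)
              ≤ Fintype.card (Fin (p ^ (k+1))) := hammingNorm_le_card_fintype
          _ = p ^ (k+1) := by simp
        omega
      · have h1 : hammingNorm (y ᵥ* A) ≤ p ^ k := hAcap y
        have h2 : hammingNorm (fun j2 : Fin (p^(k+1)) => y ⬝ᵥ ν j2 + t) = p ^ (k+1) - p ^ k := by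
          classical
          rw [hn_card, ← card_affine_ne y hy0 t]
          exact Fintype.card_congr (ν.subtypeEquiv (fun j2 => by simp))
        have h3 : p ^ k ≤ p ^ (k+1) :=
          Nat.pow_le_pow_right hp.out.pos (by omega)
        omega

lemma lambdaP_le_rec (n k : ℕ) (h1 : sigmaP p k ≤ n) :
    lambdaP p n ≤ p ^ k + lambdaP p (n - sigmaP p k) := by
  obtain ⟨A, hA, hcapA⟩ := exists_A (p := p) k
  obtain ⟨m2, B, hB, hcapB⟩ := lambdaP_exists (p := p) (n - sigmaP p k)
  have hle := lambdaP_le_add A B hA hB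
  have hcA : capacity A ≤ p ^ k := capacity_le A hcapA
  have heq : sigmaP p k + (n - sigmaP p k) = n := by omega
  rw [heq] at hle
  omega

end Construction

section Lower

variable {p : ℕ} [hp : Fact p.Prime]

lemma count_filter_t (a b : ZMod p) (hb : b ≠ 0) :
    (Finset.univ.filter fun t : ZMod p => a + t * b ≠ 0).card = p - 1 := by
  have hsol : (Finset.univ.filter fun t : ZMod p => a + t * b = 0) = {-a / b} := by
    ext t
    simp only [Finset.mem_filter, Finset.mem_univ, true_and, Finset.mem_singleton]
    rw [eq_div_iff hb]
    constructor
    · intro h; linear_combination h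
    · intro h; linear_combination h
  have htot := Finset.card_filter_add_card_filter_not
    (s := (Finset.univ : Finset (ZMod p))) (p := fun t => a + t * b = 0)
  have hcu : (Finset.univ : Finset (ZMod p)).card = p := by
    rw [Finset.card_univ, ZMod.card]
  have h1 : (Finset.univ.filter fun t : ZMod p => a + t * b = 0).card = 1 := by
    rw [hsol, Finset.card_singleton]
  have h2 : (Finset.univ.filter (fun t : ZMod p => ¬(a + t * b = 0))).card
      = (Finset.univ.filter fun t : ZMod p => a + t * b ≠ 0).card := rfl
  omega

lemma lambdaP_lower (n : ℕ) (hn : 1 ≤ n) :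
    1 ≤ lambdaP p n ∧ lambdaP p n ≤ n ∧
      p * lambdaP p (n - lambdaP p n) ≤ lambdaP p n := by
  obtain ⟨m, M, hM, hw⟩ := lambdaP_exists (p := p) n
  set w := capacity M with hwdef
  have hwn : w ≤ n := by
    apply capacity_le
    intro x
    calc hammingNorm (x ᵥ* M) ≤ Fintype.card (Fin n) := hammingNorm_le_card_fintype
    _ = n := by simp
  have hw1 : 1 ≤ w := by
    obtain ⟨i, hi⟩ := hM ⟨0, by omega⟩
    have hMi : M i ≠ 0 := fun h => hi (by rw [h]; rfl)
    have h1 := hn_row_le_capacity M i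
    have h2 : 0 < hammingNorm (M i) := hammingNorm_pos_iff.mpr hMi
    omega
  obtain ⟨x0, hx0⟩ := exists_vecMul_capacity M
  set c := x0 ᵥ* M with hc
  have hcntc : Fintype.card {j : Fin n // c j ≠ 0} = w := by
    rw [← hn_card]
    exact hx0
  have hTcard : (Finset.univ.filter fun j : Fin n => c j ≠ 0).card = w := by
    rw [← Fintype.card_subtype]
    exact hcntc
  have hcount : ∀ x : Fin m → ZMod p,
      p * Fintype.card {j : Fin n // c j = 0 ∧ (x ᵥ* M) j ≠ 0} ≤ w := by
    intro x
    set v := x ᵥ* M with hv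
    set cnt := (Finset.univ.filter fun j : Fin n => c j = 0 ∧ v j ≠ 0).card with hcnt
    -- upper bound on the sum
    have hup : ∑ t : ZMod p, hammingNorm (v + t • c) ≤ p * w := by
      calc ∑ t : ZMod p, hammingNorm (v + t • c)
          ≤ ∑ _t : ZMod p, w := by
            apply Finset.sum_le_sum
            intro t _
            have heq : v + t • c = (x + t • x0) ᵥ* M := by
              rw [Matrix.add_vecMul, Matrix.smul_vecMul]
            rw [heq]
            exact hn_vecMul_le_capacity M _
      _ = p * w := by
            rw [Finset.sum_const, Finset.card_univ, ZMod.card, smul_eq_mul]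
    -- rewrite the sum by swapping
    have hswap : ∑ t : ZMod p, hammingNorm (v + t • c)
        = ∑ j : Fin n, (Finset.univ.filter fun t : ZMod p => v j + t * c j ≠ 0).card := by
      have h1 : ∀ t : ZMod p, hammingNorm (v + t • c)
          = ∑ j : Fin n, if v j + t * c j ≠ 0 then 1 else 0 := by
        intro t
        rw [hammingNorm, Finset.card_filter]
        exact Finset.sum_congr rfl (fun j _ => by simp [smul_eq_mul])
      rw [Finset.sum_congr rfl (fun t _ => h1 t), Finset.sum_comm]
      exact Finset.sum_congr rfl (fun j _ => (Finset.card_filter _ _).symm)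
    -- per-column exact value
    have hper : ∀ j : Fin n, (Finset.univ.filter fun t : ZMod p => v j + t * c j ≠ 0).card
        = (if c j ≠ 0 then p - 1 else 0) + (if c j = 0 ∧ v j ≠ 0 then p else 0) := by
      intro j
      by_cases hcj : c j = 0
      · by_cases hvj : v j = 0
        · rw [if_neg (by simp [hcj]), if_neg (by simp [hvj])]
          simp [hcj, hvj]
        · rw [if_neg (by simp [hcj]), if_pos ⟨hcj, hvj⟩]
          have hfil : (Finset.univ.filter fun t : ZMod p => v j + t * c j ≠ 0)
              = Finset.univ :=
            Finset.filter_true_of_mem (fun t _ => by simp [hcj, hvj])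
          rw [hfil, Finset.card_univ, ZMod.card, zero_add]
      · rw [if_pos hcj, if_neg (fun h => hcj h.1), add_zero]
        exact count_filter_t (v j) (c j) hcj
    -- sum the per-column values
    have hsum : ∑ j : Fin n, (Finset.univ.filter fun t : ZMod p => v j + t * c j ≠ 0).card
        = (p - 1) * w + p * cnt := by
      rw [Finset.sum_congr rfl (fun j _ => hper j), Finset.sum_add_distrib]
      congr 1
      · rw [← Finset.sum_filter, Finset.sum_const, smul_eq_mul, hTcard, mul_comm]
      · rw [← Finset.sum_filter, Finset.sum_const, smul_eq_mul, hcnt, mul_comm]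
    have hfin : (p - 1) * w + p * cnt ≤ (p - 1) * w + w := by
      have hpw : (p - 1) * w + w = p * w := by
        have h1 : p - 1 + 1 = p := by have := hp.out.pos; omega
        calc (p - 1) * w + w = ((p - 1) + 1) * w := by ring
        _ = p * w := by rw [h1]
      rw [hpw, ← hsum, ← hswap]
      exact hup
    have hcntw : p * cnt ≤ w := le_of_add_le_add_left hfin
    rw [Fintype.card_subtype]
    exact hcntw
  -- the shortened matrix
  have hcardZ : Fintype.card {j : Fin n // c j = 0} = n - w := by
    have h1 := Fintype.card_subtype_compl (fun j : Fin n => c j ≠ 0)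
    have h2 : Fintype.card {j : Fin n // ¬ (c j ≠ 0)} = Fintype.card {j : Fin n // c j = 0} :=
      Fintype.card_congr (Equiv.subtypeEquivRight (fun j => by simp))
    rw [h2, hcntc] at h1
    simpa using h1
  set e2 : Fin (n - w) ≃ {j : Fin n // c j = 0} := (Fintype.equivFinOfCardEq hcardZ).symm
    with he2
  set M2 : Matrix (Fin m) (Fin (n - w)) (ZMod p) := fun i j' => M i (e2 j').val with hM2
  have hM2cols : ∀ j', ∃ i, M2 i j' ≠ 0 := fun j' => hM (e2 j').val
  have hcap2 : p * capacity M2 ≤ w := by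
    obtain ⟨x, hx⟩ := exists_vecMul_capacity M2
    rw [← hx]
    have hxeq : x ᵥ* M2 = fun j' => (x ᵥ* M) ((e2 j').val) := rfl
    rw [hxeq, hn_card]
    have hcards : Fintype.card {j' : Fin (n - w) // (x ᵥ* M) ((e2 j').val) ≠ 0}
        = Fintype.card {j : Fin n // c j = 0 ∧ (x ᵥ* M) j ≠ 0} := by
      apply Fintype.card_congr
      exact Equiv.trans
        (e2.subtypeEquiv (p := fun j' => (x ᵥ* M) ((e2 j').val) ≠ 0)
          (q := fun z => (x ᵥ* M) z.val ≠ 0) (fun j' => Iff.rfl))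
        (Equiv.subtypeSubtypeEquivSubtypeInter (fun j => c j = 0) (fun j => (x ᵥ* M) j ≠ 0))
    rw [hcards]
    exact hcount x
  have hle2 : lambdaP p (n - w) ≤ capacity M2 := lambdaP_le M2 hM2cols
  refine ⟨?_, ?_, ?_⟩
  · rw [hw]; exact hw1
  · rw [hw]; exact hwn
  · rw [hw]
    calc p * lambdaP p (n - w) ≤ p * capacity M2 := Nat.mul_le_mul_left p hle2
    _ ≤ w := hcap2

lemma lambdaP_eq_Fp (n : ℕ) : lambdaP p n = Fp p n := by
  have hp2 : 2 ≤ p := hp.out.two_le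
  induction n using Nat.strong_induction_on with
  | _ n ih =>
    rcases Nat.eq_zero_or_pos n with rfl | hn
    · rw [lambdaP_zero, Fp_zero]
    · obtain ⟨hl, hr⟩ := Kf_spec p n hp2 hn
      set k := Kf p n with hk
      have hs1 := sigma_pos p k
      have hup : lambdaP p n ≤ Fp p n := by
        have h := lambdaP_le_rec (p := p) n k hl
        rw [ih (n - sigmaP p k) (by omega)] at h
        rw [Fp_rec p n k hp2 hl hr]
        exact h
      have hlw : Fp p n ≤ lambdaP p n := by
        obtain ⟨h1, h2, h3⟩ := lambdaP_lower (p := p) n hn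
        rw [ih (n - lambdaP p n) (by omega)] at h3
        exact lemmaG p hp2 n (lambdaP p n) h2 h3
      omega

end Lower

theorem statement8 (p : ℕ) (hp : p.Prime) (k n : ℕ)
    (h1 : sigmaP p k ≤ n) (h2 : n < sigmaP p (k + 1)) :
    lambdaP p n = p ^ k + lambdaP p (n - sigmaP p k) := by
  haveI : Fact p.Prime := ⟨hp⟩
  rw [lambdaP_eq_Fp, lambdaP_eq_Fp, Fp_rec p n k hp.two_le h1 h2]
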